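/- For n ≥ 2, the Friedman–Smith vectors v₁ = 2e₁ − e₂ − ⋯ − eₙ and vᵢ = eᵢ for i = 2,…,n in ℤⁿ are ℝ-linearly independent, and the subgroup of ℤⁿ they generate has index 2 in ℤⁿ (the determinant of the matrix with rows v₁,…,vₙ is ±2); in particular, they do not form a ℤ-basis of ℤⁿ. (Hence the Friedman–Smith monodromy cone is not matroidal for n ≥ 2.) -/

import Mathlib

/-- The Friedman–Smith vectors for `FS_n`: `v₁ = 2e₁ − e₂ − ⋯ − eₙ` and `vᵢ = eᵢ` for
`i = 2, …, n` (written with `0`-based indices). -/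
def fsVec (n : ℕ) : Fin n → Fin n → ℤ := fun i =>
  if i.val = 0 then (fun k => if k.val = 0 then 2 else -1) else Pi.single i 1

lemma fsVec_det (n : ℕ) (hn : 2 ≤ n) : (Matrix.of (fsVec n)).det = 2 := by
  have h0 : (0:ℕ) < n := by omega
  set A : Matrix (Fin n) (Fin n) ℤ := Matrix.of fun i k =>
    if i.val = 0 then (if k.val = 0 then (1:ℤ) else -1) else if i = k then 1 else 0 with hA
  set d : Fin n → ℤ := fun k => if k.val = 0 then 2 else 1 with hd
  have hM : Matrix.of (fsVec n) = A * Matrix.diagonal d := by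
    ext i k
    rw [Matrix.mul_diagonal]
    simp only [hA, hd, Matrix.of_apply, fsVec]
    by_cases hi : i.val = 0
    · simp only [hi, if_true]
      by_cases hk : k.val = 0 <;> simp [hk]
    · simp only [hi, if_false, Pi.single_apply]
      by_cases hik : i = k
      · subst hik; simp [hi]
      · simp [hik, Ne.symm hik]
  have hAdet : A.det = 1 := by
    have ht : A.BlockTriangular id := by
      intro i j hij
      simp only [id_eq] at hij
      have hi : i.val ≠ 0 := by
        have : j.val < i.val := hij
        omega
      have hij' : i ≠ j := by
        intro h; subst h; exact lt_irrefl _ hij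
      simp [hA, hi, hij']
    rw [Matrix.det_of_upperTriangular ht]
    apply Finset.prod_eq_one
    intro i _
    by_cases hi : i.val = 0 <;> simp [hA, hi]
  have hddet : (Matrix.diagonal d).det = 2 := by
    rw [Matrix.det_diagonal]
    rw [Finset.prod_eq_single (⟨0, h0⟩ : Fin n)]
    · simp [hd]
    · intro b _ hb
      have : b.val ≠ 0 := fun h => hb (Fin.ext h)
      simp [hd, this]
    · simp
  rw [hM, Matrix.det_mul, hAdet, hddet]; ring

lemma fsVec_span (n : ℕ) (hn : 2 ≤ n) :
    (Submodule.span ℤ (Set.range (fsVec n))).toAddSubgroup =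
      (AddMonoidHom.comp (Int.castAddHom (ZMod 2))
        (Pi.evalAddMonoidHom (fun _ : Fin n => ℤ) ⟨0, by omega⟩)).ker := by
  have h0 : (0:ℕ) < n := by omega
  set i0 : Fin n := ⟨0, h0⟩ with hi0
  set φ := AddMonoidHom.comp (Int.castAddHom (ZMod 2))
      (Pi.evalAddMonoidHom (fun _ : Fin n => ℤ) i0) with hφ
  have hφapp : ∀ x : Fin n → ℤ, φ x = ((x i0 : ℤ) : ZMod 2) := fun x => rfl
  ext x
  simp only [Submodule.mem_toAddSubgroup, AddMonoidHom.mem_ker]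
  constructor
  · intro hx
    -- the kernel of φ, viewed as a submodule, contains the span
    have : x ∈ Submodule.comap (LinearMap.proj i0 : (Fin n → ℤ) →ₗ[ℤ] ℤ)
        (Submodule.span ℤ {(2:ℤ)}) := by
      refine Submodule.span_le.mpr ?_ hx
      rintro _ ⟨i, rfl⟩
      simp only [SetLike.mem_coe, Submodule.mem_comap, LinearMap.proj_apply, Submodule.mem_span_singleton]
      by_cases hi : i.val = 0
      · refine ⟨1, ?_⟩
        show (1:ℤ) • 2 = fsVec n i i0
        simp [fsVec, hi, hi0]
      · refine ⟨0, ?_⟩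
        show (0:ℤ) • 2 = fsVec n i i0
        have hne : i0 ≠ i := fun h => hi (by rw [← h])
        simp [fsVec, hi, Pi.single_apply, hne]
    simp only [SetLike.mem_coe, Submodule.mem_comap, LinearMap.proj_apply, Submodule.mem_span_singleton] at this
    obtain ⟨m, hm⟩ := this
    rw [hφapp, ← hm, smul_eq_mul]
    push_cast
    have h2z : (2 : ZMod 2) = 0 := by decide
    rw [h2z, mul_zero]
  · intro hx
    rw [hφapp, ZMod.intCast_zmod_eq_zero_iff_dvd] at hx
    obtain ⟨m, hm⟩ := hx
    have hx_eq : x = m • fsVec n i0 +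
        ∑ i ∈ Finset.univ.erase i0, (x i + m) • fsVec n i := by
      funext k
      simp only [Pi.add_apply, Pi.smul_apply, Finset.sum_apply, smul_eq_mul]
      have hterm : ∀ i ∈ Finset.univ.erase i0,
          (x i + m) * fsVec n i k = if k = i then x i + m else 0 := by
        intro i hi
        have hival : i.val ≠ 0 := by
          intro h
          exact (Finset.mem_erase.mp hi).1 (Fin.ext (by simp [hi0, h]))
        simp [fsVec, hival, Pi.single_apply, mul_ite]
      rw [Finset.sum_congr rfl hterm, Finset.sum_ite_eq]
      have h10 : fsVec n i0 k = if k.val = 0 then 2 else -1 := by simp [fsVec, hi0]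
      by_cases hk : k = i0
      · subst hk
        simp only [Finset.mem_erase, ne_eq, not_true_eq_false, false_and, if_false]
        rw [h10, if_pos (show i0.val = 0 from rfl)]
        omega
      · have hkval : k.val ≠ 0 := fun h => hk (Fin.ext (by simp [hi0, h]))
        simp only [Finset.mem_erase, ne_eq, hk, not_false_eq_true, Finset.mem_univ, and_true,
          if_true]
        rw [h10]
        simp only [hkval, if_false]
        ring
    rw [hx_eq]
    refine add_mem (Submodule.smul_mem _ _ (Submodule.subset_span ⟨i0, rfl⟩)) ?_
    exact Submodule.sum_mem _ fun i _ =>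
      Submodule.smul_mem _ _ (Submodule.subset_span ⟨i, rfl⟩)

lemma zmod2_card_range {G : Type*} [AddCommGroup G] (f : G →+ ZMod 2)
    (hf : Function.Surjective f) : Nat.card f.range = 2 := by
  have hr : f.range = ⊤ := AddMonoidHom.range_eq_top.2 hf
  rw [hr]
  have h := Nat.card_congr (AddSubgroup.topEquiv (G := ZMod 2)).toEquiv
  rw [h, Nat.card_zmod]

/-- For `n ≥ 2`, the Friedman–Smith vectors `v₁ = 2e₁ − e₂ − ⋯ − eₙ`, `vᵢ = eᵢ`
(`i = 2, …, n`) in `ℤⁿ` are `ℝ`-linearly independent, the subgroup of `ℤⁿ` they generate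
has index `2` (the determinant of the matrix with these rows is `±2`), and in particular
they do not form a `ℤ`-basis of `ℤⁿ`.  (Hence the Friedman–Smith monodromy cone is not
matroidal for `n ≥ 2`.) -/
theorem fsVec_index_two (n : ℕ) (hn : 2 ≤ n) :
    LinearIndependent ℝ (fun i : Fin n => fun k : Fin n => ((fsVec n i k : ℤ) : ℝ)) ∧
    (Submodule.span ℤ (Set.range (fsVec n))).toAddSubgroup.index = 2 ∧
    ((Matrix.of (fsVec n)).det = 2 ∨ (Matrix.of (fsVec n)).det = -2) ∧
    Submodule.span ℤ (Set.range (fsVec n)) ≠ ⊤ := by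
  have h0 : (0:ℕ) < n := by omega
  have hdet := fsVec_det n hn
  -- linear independence over ℝ
  have h1 : LinearIndependent ℝ (fun i : Fin n => fun k : Fin n => ((fsVec n i k : ℤ) : ℝ)) := by
    have heq : (fun i : Fin n => fun k : Fin n => ((fsVec n i k : ℤ) : ℝ))
        = ((Matrix.of (fsVec n)).map (Int.cast : ℤ → ℝ)).row := rfl
    rw [heq, Matrix.linearIndependent_rows_iff_isUnit, Matrix.isUnit_iff_isUnit_det]
    have hmap : ((Matrix.of (fsVec n)).map (Int.cast : ℤ → ℝ)).det
        = (((Matrix.of (fsVec n)).det : ℤ) : ℝ) := by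
      have h := RingHom.map_det (Int.castRingHom ℝ) (Matrix.of (fsVec n))
      rw [RingHom.mapMatrix_apply] at h
      exact h.symm
    rw [hmap, hdet]
    norm_num
  -- index
  have h2 : (Submodule.span ℤ (Set.range (fsVec n))).toAddSubgroup.index = 2 := by
    rw [fsVec_span n hn, AddSubgroup.index_ker]
    have hsurj : Function.Surjective ⇑(AddMonoidHom.comp (Int.castAddHom (ZMod 2))
        (Pi.evalAddMonoidHom (fun _ : Fin n => ℤ) (⟨0, h0⟩ : Fin n))) := by
      intro y
      obtain ⟨z, hz⟩ := ZMod.intCast_surjective (n := 2) y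
      refine ⟨Pi.single ⟨0, h0⟩ z, ?_⟩
      simpa [AddMonoidHom.coe_comp, Function.comp, Pi.evalAddMonoidHom_apply,
        Int.coe_castAddHom, Pi.single_eq_same] using hz
    exact zmod2_card_range _ hsurj
  refine ⟨h1, h2, Or.inl hdet, ?_⟩
  intro htop
  rw [htop] at h2
  have : (⊤ : Submodule ℤ (Fin n → ℤ)).toAddSubgroup = ⊤ := rfl
  rw [this, AddSubgroup.index_top] at h2
  omega
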